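/- Let m be a nonnegative integer and let λ be any partition. Writing M_l for the number of boxes of the m-tableau T_m(λ) carrying the entry l, the following hold: (i) M_p − M_{p+1} ∈ {0, 1, 2} for every integer p with p ≥ m and p ≥ 1; (ii) M_p − M_{p+1} ∈ {−1, 0, 1} for every integer p with 1 ≤ p ≤ m − 1; (iii) if m ≥ 1 then M_0 ∈ {⌊M_1/2⌋, ⌈M_1/2⌉}; (iv) if m = 0 then M_0 ∈ {⌊(M_1+1)/2⌋, ⌈(M_1+1)/2⌉}. -/

import Mathlib

open scoped Classical

/-- The multiplicity `M_l` of the entry `l` in the `m`-tableau `T_m(λ)`: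
the number of boxes `(i,j)` (here 0-indexed, so the box in row `i+1` and
column `j+1` of the Young diagram of `lam`, i.e. `j < lam i`) whose entry
`|i - j + m|` equals `l`. -/
noncomputable def Mmult (lam : ℕ → ℕ) (m : ℝ) (l : ℝ) : ℕ :=
  Set.ncard {p : ℕ × ℕ | p.2 < lam p.1 ∧ |(p.1 : ℝ) - (p.2 : ℝ) + m| = l}





namespace Stmt0Aux

def diagSet (lam : ℕ → ℕ) (c : ℤ) : Set (ℕ × ℕ) :=
  {p : ℕ × ℕ | p.2 < lam p.1 ∧ (p.1 : ℤ) - (p.2 : ℤ) = c}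

noncomputable def D (lam : ℕ → ℕ) (c : ℤ) : ℕ := (diagSet lam c).ncard

variable {lam : ℕ → ℕ}

lemma diag_finite (hanti : Antitone lam) (hfin : ∃ N, ∀ i, N ≤ i → lam i = 0)
    (c : ℤ) : (diagSet lam c).Finite := by
  obtain ⟨N, hN⟩ := hfin
  apply ((Set.finite_Iio N).prod (Set.finite_Iio (lam 0))).subset
  rintro ⟨i, j⟩ ⟨h1, -⟩
  refine ⟨?_, ?_⟩
  · simp only [Set.mem_Iio]
    by_contra h
    rw [hN i (not_lt.mp h)] at h1
    omega
  · exact lt_of_lt_of_le h1 (hanti (Nat.zero_le i))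

lemma D_succ_le (hanti : Antitone lam) (hfin : ∃ N, ∀ i, N ≤ i → lam i = 0)
    (c : ℤ) (hc : 0 ≤ c) : D lam (c + 1) ≤ D lam c := by
  refine Set.ncard_le_ncard_of_injOn (fun p => (p.1 - 1, p.2)) ?_ ?_
    (diag_finite hanti hfin _)
  · rintro ⟨i, j⟩ ⟨h1, h2⟩
    simp only [diagSet, Set.mem_setOf_eq] at h1 h2 ⊢
    exact ⟨lt_of_lt_of_le h1 (hanti (Nat.sub_le i 1)), by omega⟩
  · rintro ⟨i, j⟩ ⟨h1, h2⟩ ⟨i', j'⟩ ⟨h1', h2'⟩ h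
    simp only [Prod.mk.injEq] at h ⊢
    omega

lemma D_pred_le (hanti : Antitone lam) (hfin : ∃ N, ∀ i, N ≤ i → lam i = 0)
    (c : ℤ) (hc : c ≤ 0) : D lam (c - 1) ≤ D lam c := by
  refine Set.ncard_le_ncard_of_injOn (fun p => (p.1, p.2 - 1)) ?_ ?_
    (diag_finite hanti hfin _)
  · rintro ⟨i, j⟩ ⟨h1, h2⟩
    simp only [diagSet, Set.mem_setOf_eq] at h1 h2 ⊢
    have hj : 1 ≤ j := by omega
    exact ⟨by omega, by omega⟩
  · rintro ⟨i, j⟩ ⟨h1, h2⟩ ⟨i', j'⟩ ⟨h1', h2'⟩ h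
    simp only [Prod.mk.injEq] at h ⊢
    omega

lemma ncard_le_diff_add {s : Set (ℕ × ℕ)} (hs : s.Finite) (a : ℕ × ℕ) :
    s.ncard ≤ (s \ {a}).ncard + 1 := by
  have hsub : s ⊆ (s \ {a}) ∪ {a} := by
    intro x hx
    by_cases h : x = a
    · exact Or.inr h
    · exact Or.inl ⟨hx, h⟩
  have h1 := Set.ncard_le_ncard hsub (hs.diff.union (Set.finite_singleton a))
  have h2 := Set.ncard_union_le (s \ {a}) ({a} : Set (ℕ × ℕ))
  simp only [Set.ncard_singleton] at h2
  omega

lemma D_le_succ (hanti : Antitone lam) (hfin : ∃ N, ∀ i, N ≤ i → lam i = 0)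
    (c : ℤ) : D lam c ≤ D lam (c + 1) + 1 := by
  have key : (diagSet lam c \ {(c.toNat, 0)}).ncard ≤ D lam (c + 1) := by
    refine Set.ncard_le_ncard_of_injOn (fun p => (p.1, p.2 - 1)) ?_ ?_
      (diag_finite hanti hfin _)
    · rintro ⟨i, j⟩ ⟨⟨h1, h2⟩, hne⟩
      simp only [Set.mem_singleton_iff, Prod.mk.injEq, not_and] at hne
      simp only [diagSet, Set.mem_setOf_eq] at h1 h2 ⊢
      have hj : 1 ≤ j := by
        by_contra h
        have hj0 : j = 0 := by omega
        exact hne (by omega) hj0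
      exact ⟨by omega, by omega⟩
    · rintro ⟨i, j⟩ ⟨⟨h1, h2⟩, -⟩ ⟨i', j'⟩ ⟨⟨h1', h2'⟩, -⟩ h
      simp only [Prod.mk.injEq] at h ⊢
      exact ⟨by omega, by omega⟩
  have := ncard_le_diff_add (diag_finite hanti hfin c) (c.toNat, 0)
  unfold D at *
  omega

lemma D_le_pred (hanti : Antitone lam) (hfin : ∃ N, ∀ i, N ≤ i → lam i = 0)
    (c : ℤ) : D lam c ≤ D lam (c - 1) + 1 := by
  have key : (diagSet lam c \ {(0, (-c).toNat)}).ncard ≤ D lam (c - 1) := by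
    refine Set.ncard_le_ncard_of_injOn (fun p => (p.1 - 1, p.2)) ?_ ?_
      (diag_finite hanti hfin _)
    · rintro ⟨i, j⟩ ⟨⟨h1, h2⟩, hne⟩
      simp only [Set.mem_singleton_iff, Prod.mk.injEq, not_and] at hne
      simp only [diagSet, Set.mem_setOf_eq] at h1 h2 ⊢
      have hi : 1 ≤ i := by
        by_contra h
        have hi0 : i = 0 := by omega
        exact hne hi0 (by omega)
      exact ⟨lt_of_lt_of_le h1 (hanti (Nat.sub_le i 1)), by omega⟩
    · rintro ⟨i, j⟩ ⟨⟨h1, h2⟩, -⟩ ⟨i', j'⟩ ⟨⟨h1', h2'⟩, -⟩ h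
      simp only [Prod.mk.injEq] at h ⊢
      exact ⟨by omega, by omega⟩
  have := ncard_le_diff_add (diag_finite hanti hfin c) (0, (-c).toNat)
  unfold D at *
  omega

lemma D_le_left (hanti : Antitone lam) (hfin : ∃ N, ∀ i, N ≤ i → lam i = 0)
    (c d : ℤ) (h : c = d + 1) (hd : 0 ≤ d) : D lam c ≤ D lam d := by
  rw [h]; exact D_succ_le hanti hfin d hd

lemma D_le_right (hanti : Antitone lam) (hfin : ∃ N, ∀ i, N ≤ i → lam i = 0)
    (c d : ℤ) (h : c = d - 1) (hd : d ≤ 0) : D lam c ≤ D lam d := by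
  rw [h]; exact D_pred_le hanti hfin d hd

lemma D_le_add_left (hanti : Antitone lam) (hfin : ∃ N, ∀ i, N ≤ i → lam i = 0)
    (c d : ℤ) (h : d = c + 1) : D lam c ≤ D lam d + 1 := by
  rw [h]; exact D_le_succ hanti hfin c

lemma D_le_add_right (hanti : Antitone lam) (hfin : ∃ N, ∀ i, N ≤ i → lam i = 0)
    (c d : ℤ) (h : d = c - 1) : D lam c ≤ D lam d + 1 := by
  rw [h]; exact D_le_pred hanti hfin c


end Stmt0Aux


namespace Stmt0Aux

lemma Mmult_zero {lam : ℕ → ℕ} (m : ℕ) :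
    Mmult lam m 0 = D lam (-(m : ℤ)) := by
  unfold Mmult D
  congr 1
  ext ⟨i, j⟩
  simp only [Set.mem_setOf_eq, diagSet, abs_eq_zero]
  constructor
  · rintro ⟨h1, h2⟩
    refine ⟨h1, ?_⟩
    have : ((i : ℤ) - j + m : ℤ) = 0 := by exact_mod_cast h2
    omega
  · rintro ⟨h1, h2⟩
    refine ⟨h1, ?_⟩
    have : ((i : ℤ) - j + m : ℤ) = 0 := by omega
    exact_mod_cast this

lemma Mmult_nat {lam : ℕ → ℕ} (hanti : Antitone lam)
    (hfin : ∃ N, ∀ i, N ≤ i → lam i = 0) (m l : ℕ) (hl : 1 ≤ l) :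
    Mmult lam m l = D lam ((l : ℤ) - m) + D lam (-(l : ℤ) - m) := by
  have hset : {p : ℕ × ℕ | p.2 < lam p.1 ∧ |(p.1 : ℝ) - (p.2 : ℝ) + m| = l}
      = diagSet lam ((l : ℤ) - m) ∪ diagSet lam (-(l : ℤ) - m) := by
    ext ⟨i, j⟩
    simp only [Set.mem_setOf_eq, Set.mem_union, diagSet]
    constructor
    · rintro ⟨h1, h2⟩
      rcases (abs_eq (by positivity : (0:ℝ) ≤ (l : ℝ))).mp h2 with h | h
      · left
        refine ⟨h1, ?_⟩
        have : ((i : ℤ) - j + m : ℤ) = l := by exact_mod_cast h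
        omega
      · right
        refine ⟨h1, ?_⟩
        have : ((i : ℤ) - j + m : ℤ) = -l := by exact_mod_cast h
        omega
    · rintro (⟨h1, h2⟩ | ⟨h1, h2⟩)
      · refine ⟨h1, ?_⟩
        rw [abs_eq (by positivity : (0:ℝ) ≤ (l : ℝ))]
        left
        have : ((i : ℤ) - j + m : ℤ) = l := by omega
        exact_mod_cast this
      · refine ⟨h1, ?_⟩
        rw [abs_eq (by positivity : (0:ℝ) ≤ (l : ℝ))]
        right
        have : ((i : ℤ) - j + m : ℤ) = -l := by omega
        exact_mod_cast this
  have hdis : Disjoint (diagSet lam ((l : ℤ) - m)) (diagSet lam (-(l : ℤ) - m)) := by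
    rw [Set.disjoint_left]
    rintro ⟨i, j⟩ ⟨h1, h2⟩ ⟨h1', h2'⟩
    omega
  unfold Mmult D
  rw [hset, Set.ncard_union_eq hdis (diag_finite hanti hfin _) (diag_finite hanti hfin _)]

end Stmt0Aux
namespace Stmt0Aux

lemma two_step {a b c d : ℕ} (h1 : a ≤ c + 1) (h2 : b ≤ d + 1) :
    a + b ≤ c + d + 2 := by omega

lemma one_step_l {a b c d : ℕ} (h1 : a ≤ c) (h2 : b ≤ d + 1) :
    a + b ≤ c + d + 1 := by omega

lemma one_step_r {a b c d : ℕ} (h1 : a ≤ c + 1) (h2 : b ≤ d) :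
    a + b ≤ c + d + 1 := by omega

lemma half_cases {a x y : ℕ} (h1 : a ≤ x) (h2 : x ≤ a + 1) (h3 : y ≤ a)
    (h4 : a ≤ y + 1) : a = (x + y) / 2 ∨ a = (x + y + 1) / 2 := by omega

lemma half_cases' {a x y : ℕ} (h1 : x ≤ a) (h2 : a ≤ x + 1) (h3 : y ≤ a)
    (h4 : a ≤ y + 1) : a = (x + y + 1) / 2 ∨ a = (x + y + 2) / 2 := by omega

end Stmt0Aux

/-- for a nonnegative integer `m` and any partition `lam`
(a weakly decreasing, eventually-zero function recording the parts), the
multiplicities `M_l` of the entries of the `m`-tableau satisfy: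
(i) `M_p - M_{p+1} ∈ {0,1,2}` for integers `p ≥ m`, `p ≥ 1`;
(ii) `M_p - M_{p+1} ∈ {-1,0,1}` for integers `1 ≤ p ≤ m-1`;
(iii) if `m ≥ 1` then `M_0 ∈ {⌊M_1/2⌋, ⌈M_1/2⌉}`;
(iv) if `m = 0` then `M_0 ∈ {⌊(M_1+1)/2⌋, ⌈(M_1+1)/2⌉}`. -/
theorem stmt0 (m : ℕ) (lam : ℕ → ℕ)
    (hanti : Antitone lam) (hfin : ∃ N, ∀ i, N ≤ i → lam i = 0) :
    (∀ p : ℕ, m ≤ p → 1 ≤ p →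
      Mmult lam m ((p : ℝ) + 1) ≤ Mmult lam m (p : ℝ) ∧
      Mmult lam m (p : ℝ) ≤ Mmult lam m ((p : ℝ) + 1) + 2) ∧
    (∀ p : ℕ, 1 ≤ p → p + 1 ≤ m →
      Mmult lam m (p : ℝ) ≤ Mmult lam m ((p : ℝ) + 1) + 1 ∧
      Mmult lam m ((p : ℝ) + 1) ≤ Mmult lam m (p : ℝ) + 1) ∧
    (1 ≤ m →
      (Mmult lam m 0 = Mmult lam m 1 / 2 ∨
       Mmult lam m 0 = (Mmult lam m 1 + 1) / 2)) ∧
    (m = 0 →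
      (Mmult lam m 0 = (Mmult lam m 1 + 1) / 2 ∨
       Mmult lam m 0 = (Mmult lam m 1 + 2) / 2)) := by
  refine ⟨?_, ?_, ?_, ?_⟩
  · intro p hm hp
    rw [show ((p : ℝ) + 1) = ((p + 1 : ℕ) : ℝ) from by push_cast; ring,
      Stmt0Aux.Mmult_nat hanti hfin m p hp,
      Stmt0Aux.Mmult_nat hanti hfin m (p + 1) (by omega)]
    constructor
    · exact add_le_add
        (Stmt0Aux.D_le_left hanti hfin _ _ (by omega) (by omega))
        (Stmt0Aux.D_le_right hanti hfin _ _ (by omega) (by omega))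
    · exact Stmt0Aux.two_step
        (Stmt0Aux.D_le_add_left hanti hfin _ _ (by omega))
        (Stmt0Aux.D_le_add_right hanti hfin _ _ (by omega))
  · intro p hp hpm
    rw [show ((p : ℝ) + 1) = ((p + 1 : ℕ) : ℝ) from by push_cast; ring,
      Stmt0Aux.Mmult_nat hanti hfin m p hp,
      Stmt0Aux.Mmult_nat hanti hfin m (p + 1) (by omega)]
    constructor
    · exact Stmt0Aux.one_step_l
        (Stmt0Aux.D_le_right hanti hfin _ _ (by omega) (by omega))
        (Stmt0Aux.D_le_add_right hanti hfin _ _ (by omega))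
    · exact Stmt0Aux.one_step_r
        (Stmt0Aux.D_le_add_right hanti hfin _ _ (by omega))
        (Stmt0Aux.D_le_right hanti hfin _ _ (by omega) (by omega))
  · intro hm
    rw [Stmt0Aux.Mmult_zero m,
      show (1 : ℝ) = ((1 : ℕ) : ℝ) from by norm_num,
      Stmt0Aux.Mmult_nat hanti hfin m 1 le_rfl]
    exact Stmt0Aux.half_cases
      (Stmt0Aux.D_le_right hanti hfin _ _ (by omega) (by omega))
      (Stmt0Aux.D_le_add_right hanti hfin _ _ (by omega))
      (Stmt0Aux.D_le_right hanti hfin _ _ (by omega) (by omega))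
      (Stmt0Aux.D_le_add_right hanti hfin _ _ (by omega))
  · intro hm
    subst hm
    rw [Stmt0Aux.Mmult_zero 0,
      show (1 : ℝ) = ((1 : ℕ) : ℝ) from by norm_num,
      Stmt0Aux.Mmult_nat hanti hfin 0 1 le_rfl]
    exact Stmt0Aux.half_cases'
      (Stmt0Aux.D_le_left hanti hfin _ _ (by omega) (by omega))
      (Stmt0Aux.D_le_add_left hanti hfin _ _ (by omega))
      (Stmt0Aux.D_le_right hanti hfin _ _ (by omega) (by omega))
      (Stmt0Aux.D_le_add_right hanti hfin _ _ (by omega))
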